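/- Let A : ℝ → Matrix (Fin J) (Fin J) ℝ be continuous on [a,t], and let B(s,t) = ∑_{m=0}^∞ I_m(s,t) be the Peano–Baker series of A. Then for all a ≤ s ≤ t, B satisfies the two Volterra integral equations B(s,t) = Id + ∫_s^t A(x) B(x,t) dx and B(s,t) = Id + ∫_s^t B(s,x) A(x) dx. -/

import Mathlib

open MeasureTheory intervalIntegral

attribute [local instance] Matrix.linftyOpNormedAddCommGroup Matrix.linftyOpNormedSpace
  Matrix.linftyOpNormedRing Matrix.linftyOpNormedAlgebra

/-- Iterated integrals of the Peano-Baker series: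
`I_0(s,t) = Id`, `I_{m+1}(s,t) = int_s^t I_m(s,x) A(x) dx`. -/
noncomputable def iterInt {ι : Type*} [Fintype ι] [DecidableEq ι]
    (A : ℝ → Matrix ι ι ℝ) : ℕ → ℝ → ℝ → Matrix ι ι ℝ
  | 0, _s, _t => 1
  | m + 1, s, t => ∫ x in s..t, iterInt A m s x * A x

/-- The Peano-Baker series (product integral) of `A` over `(s,t]`. -/
noncomputable def peanoBaker {ι : Type*} [Fintype ι] [DecidableEq ι]
    (A : ℝ → Matrix ι ι ℝ) (s t : ℝ) : Matrix ι ι ℝ :=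
  ∑' m : ℕ, iterInt A m s t

variable {J : ℕ}

noncomputable instance matENorm {J : ℕ} : ENormedAddMonoid (Matrix (Fin J) (Fin J) ℝ) :=
  @NormedAddGroup.toENormedAddMonoid _ _

theorem iterInt_congr {A₁ A₂ : ℝ → Matrix (Fin J) (Fin J) ℝ} {a t : ℝ}
    (h : ∀ x ∈ Set.Icc a t, A₁ x = A₂ x) :
    ∀ m, ∀ s ∈ Set.Icc a t, ∀ u ∈ Set.Icc a t, iterInt A₁ m s u = iterInt A₂ m s u := by
  intro m
  induction m with
  | zero => intro s _ u _; rfl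
  | succ m ih =>
    intro s hs u hu
    show (∫ x in s..u, iterInt A₁ m s x * A₁ x) = ∫ x in s..u, iterInt A₂ m s x * A₂ x
    apply intervalIntegral.integral_congr
    intro x hx
    have hx' : x ∈ Set.Icc a t := by
      have : Set.uIcc s u ⊆ Set.Icc a t := Set.uIcc_subset_Icc hs hu
      exact this hx
    simp only []
    rw [ih s hs x hx', h x hx']

theorem iterInt_continuous {A : ℝ → Matrix (Fin J) (Fin J) ℝ} (hA : Continuous A) :
    ∀ m, Continuous fun p : ℝ × ℝ => iterInt A m p.1 p.2 := by
  intro m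
  induction m with
  | zero => exact continuous_const
  | succ m ih =>
    have hc : Continuous fun q : (ℝ × ℝ) × ℝ => iterInt A m q.1.1 q.2 :=
      ih.comp (show Continuous fun q : (ℝ × ℝ) × ℝ => (q.1.1, q.2) by fun_prop)
    have hf : Continuous fun q : (ℝ × ℝ) × ℝ => iterInt A m q.1.1 q.2 * A q.2 :=
      hc.mul (hA.comp continuous_snd)
    have h1 : Continuous fun p : ℝ × ℝ => ∫ x in (0:ℝ)..p.2, iterInt A m p.1 x * A x :=
      continuous_parametric_intervalIntegral_of_continuous (f := fun (p : ℝ × ℝ) x => iterInt A m p.1 x * A x) hf continuous_snd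
    have h2 : Continuous fun p : ℝ × ℝ => ∫ x in (0:ℝ)..p.1, iterInt A m p.1 x * A x :=
      continuous_parametric_intervalIntegral_of_continuous (f := fun (p : ℝ × ℝ) x => iterInt A m p.1 x * A x) hf continuous_fst
    have key : ∀ p : ℝ × ℝ, iterInt A (m+1) p.1 p.2
        = (∫ x in (0:ℝ)..p.2, iterInt A m p.1 x * A x) - ∫ x in (0:ℝ)..p.1, iterInt A m p.1 x * A x := by
      intro p
      show (∫ x in p.1..p.2, iterInt A m p.1 x * A x) = _
      have hint : ∀ b c : ℝ, IntervalIntegrable (fun x => iterInt A m p.1 x * A x) volume b c := by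
        intro b c
        exact ((ih.comp (by fun_prop : Continuous fun x : ℝ => (p.1, x))).mul hA).intervalIntegrable b c
      rw [intervalIntegral.integral_interval_sub_left (hint 0 p.2) (hint 0 p.1)]
    simpa only [key, Pi.sub_def] using h1.sub h2

theorem iterInt_norm_le {A : ℝ → Matrix (Fin J) (Fin J) ℝ} (hA : Continuous A)
    {M : ℝ} (hM : 0 ≤ M) {s u : ℝ} (hsu : s ≤ u)
    (hb : ∀ x ∈ Set.Icc s u, ‖A x‖ ≤ M) :
    ∀ m, ‖iterInt A m s u‖ ≤ (M * (u - s)) ^ m / m.factorial := by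
  -- strengthen: bound for all u' in [s,u]
  suffices H : ∀ m, ∀ u' ∈ Set.Icc s u, ‖iterInt A m s u'‖ ≤ (M * (u' - s)) ^ m / m.factorial from
    fun m => H m u ⟨hsu, le_refl u⟩
  intro m
  induction m with
  | zero =>
    intro u' _
    simp only [pow_zero, Nat.factorial_zero, Nat.cast_one, div_one]
    show ‖(1 : Matrix (Fin J) (Fin J) ℝ)‖ ≤ 1
    rw [show (1 : Matrix (Fin J) (Fin J) ℝ) = Matrix.diagonal 1 from rfl,
      Matrix.linfty_opNorm_diagonal]
    apply pi_norm_le_iff_of_nonneg (by norm_num) |>.2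
    intro i; simp
  | succ m ih =>
    intro u' hu'
    have hsu' : s ≤ u' := hu'.1
    have hcont : Continuous fun x : ℝ => iterInt A m s x :=
      (iterInt_continuous hA m).comp (by fun_prop : Continuous fun x : ℝ => (s, x))
    calc ‖iterInt A (m+1) s u'‖ = ‖∫ x in s..u', iterInt A m s x * A x‖ := rfl
      _ ≤ ∫ x in s..u', ‖iterInt A m s x * A x‖ :=
          intervalIntegral.norm_integral_le_integral_norm hsu'
      _ ≤ ∫ x in s..u', M ^ (m+1) * (x - s) ^ m / m.factorial := by
          apply intervalIntegral.integral_mono_on hsu'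
          · exact (hcont.mul hA).norm.intervalIntegrable s u'
          · exact (by fun_prop : Continuous fun x : ℝ => M ^ (m+1) * (x - s) ^ m / m.factorial).intervalIntegrable s u'
          · intro x hx
            have hx' : x ∈ Set.Icc s u := ⟨hx.1, hx.2.trans hu'.2⟩
            have h1 : ‖iterInt A m s x‖ ≤ (M * (x - s)) ^ m / m.factorial :=
              ih x hx'
            calc ‖iterInt A m s x * A x‖ ≤ ‖iterInt A m s x‖ * ‖A x‖ := norm_mul_le _ _
              _ ≤ (M * (x - s)) ^ m / m.factorial * M := by
                  exact mul_le_mul h1 (hb x hx') (norm_nonneg _)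
                    (div_nonneg (pow_nonneg (mul_nonneg hM (sub_nonneg.2 hx.1)) m) (by positivity))
              _ = M ^ (m+1) * (x - s) ^ m / m.factorial := by
                  rw [mul_pow]; ring
      _ = (M * (u' - s)) ^ (m+1) / (m+1).factorial := by
          rw [intervalIntegral.integral_div, intervalIntegral.integral_const_mul]
          rw [show (fun x => (x - s) ^ m) = fun x => (fun y => y ^ m) (x - s) from rfl]
          rw [intervalIntegral.integral_comp_sub_right (fun y => y ^ m) s, integral_pow]
          rw [mul_pow, Nat.factorial_succ]
          push_cast
          field_simp
          simp

theorem fubini_triangle {E : Type*} [NormedAddCommGroup E] [NormedSpace ℝ E] [CompleteSpace E]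
    {G : ℝ → ℝ → E} (hG : Continuous fun p : ℝ × ℝ => G p.1 p.2) {s u : ℝ} (hsu : s ≤ u) :
    (∫ x in s..u, ∫ y in s..x, G y x) = ∫ y in s..u, ∫ x in y..u, G y x := by
  set F : ℝ × ℝ → E := fun p => Set.indicator {p : ℝ × ℝ | p.2 ≤ p.1} (fun p => G p.2 p.1) p with hF
  have hGc : Continuous fun p : ℝ × ℝ => G p.2 p.1 := hG.comp (continuous_snd.prodMk continuous_fst)
  have hFmeas : StronglyMeasurable F :=
    hGc.stronglyMeasurable.indicator (isClosed_le continuous_snd continuous_fst).measurableSet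
  obtain ⟨C, hC⟩ := (isCompact_Icc.prod isCompact_Icc).exists_bound_of_continuousOn
    (s := Set.Icc s u ×ˢ Set.Icc s u) hGc.continuousOn
  have hC0 : 0 ≤ C := (norm_nonneg _).trans (hC (s, s) (by simp [hsu]))
  haveI : IsFiniteMeasure (volume.restrict (Set.Ioc s u)) :=
    ⟨by rw [Measure.restrict_apply_univ]; exact measure_Ioc_lt_top⟩
  have hFapply : ∀ p : ℝ × ℝ, F p = if p.2 ≤ p.1 then G p.2 p.1 else 0 := by
    intro p
    rw [hF]
    exact Set.indicator_apply _ _ _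
  have hμ : (volume.restrict (Set.Ioc s u)).prod (volume.restrict (Set.Ioc s u))
      = (volume.prod volume).restrict (Set.Ioc s u ×ˢ Set.Ioc s u) :=
    Measure.prod_restrict _ _
  have hFint : Integrable F ((volume.restrict (Set.Ioc s u)).prod (volume.restrict (Set.Ioc s u))) := by
    apply Integrable.mono' (integrable_const C) hFmeas.aestronglyMeasurable
    rw [hμ, ae_restrict_iff' (measurableSet_Ioc.prod measurableSet_Ioc)]
    filter_upwards with p hp
    rw [hFapply]
    split_ifs with h
    · exact hC p ⟨Set.Ioc_subset_Icc_self hp.1, Set.Ioc_subset_Icc_self hp.2⟩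
    · rw [norm_zero]; exact hC0
  have swap := MeasureTheory.integral_integral_swap (f := fun x y => F (x, y)) hFint
  have lhs : (∫ x in s..u, ∫ y in s..x, G y x)
      = ∫ x in Set.Ioc s u, ∫ y in Set.Ioc s u, F (x, y) := by
    rw [intervalIntegral.integral_of_le hsu]
    apply setIntegral_congr_fun measurableSet_Ioc
    intro x hx
    show (∫ y in s..x, G y x) = ∫ y in Set.Ioc s u, F (x, y)
    have key : (fun y => F (x, y)) = Set.indicator (Set.Iic x) (fun y => G y x) := by
      funext y
      rw [hFapply, Set.indicator_apply]
      simp only [Set.mem_Iic]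
    rw [key, setIntegral_indicator measurableSet_Iic,
      show Set.Ioc s u ∩ Set.Iic x = Set.Ioc s x by
        ext y; simp only [Set.mem_inter_iff, Set.mem_Ioc, Set.mem_Iic]
        exact ⟨fun ⟨⟨h1, _⟩, h3⟩ => ⟨h1, h3⟩, fun ⟨h1, h2⟩ => ⟨⟨h1, h2.trans hx.2⟩, h2⟩⟩,
      intervalIntegral.integral_of_le hx.1.le]
  have rhs : (∫ y in s..u, ∫ x in y..u, G y x)
      = ∫ y in Set.Ioc s u, ∫ x in Set.Ioc s u, F (x, y) := by
    rw [intervalIntegral.integral_of_le hsu]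
    apply setIntegral_congr_fun measurableSet_Ioc
    intro y hy
    show (∫ x in y..u, G y x) = ∫ x in Set.Ioc s u, F (x, y)
    have key : (fun x => F (x, y)) = Set.indicator (Set.Ici y) (fun x => G y x) := by
      funext x
      rw [hFapply, Set.indicator_apply]
      simp only [Set.mem_Ici]
    rw [key, setIntegral_indicator measurableSet_Ici,
      show Set.Ioc s u ∩ Set.Ici y = Set.Icc y u by
        ext x; simp only [Set.mem_inter_iff, Set.mem_Ioc, Set.mem_Icc, Set.mem_Ici]
        exact ⟨fun ⟨⟨_, h2⟩, h3⟩ => ⟨h3, h2⟩, fun ⟨h1, h2⟩ => ⟨⟨lt_of_lt_of_le hy.1 h1, h2⟩, h1⟩⟩,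
      integral_Icc_eq_integral_Ioc, intervalIntegral.integral_of_le hy.2]
  rw [lhs, rhs]
  exact swap

theorem intervalIntegral_mul_const {J : ℕ} {f : ℝ → Matrix (Fin J) (Fin J) ℝ} {a b : ℝ}
    (hf : IntervalIntegrable f volume a b) (C : Matrix (Fin J) (Fin J) ℝ) :
    (∫ x in a..b, f x * C) = (∫ x in a..b, f x) * C := by
  have := (((ContinuousLinearMap.mul ℝ (Matrix (Fin J) (Fin J) ℝ)).flip C).intervalIntegral_comp_comm hf)
  simpa using this

theorem intervalIntegral_const_mul {J : ℕ} {f : ℝ → Matrix (Fin J) (Fin J) ℝ} {a b : ℝ}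
    (hf : IntervalIntegrable f volume a b) (C : Matrix (Fin J) (Fin J) ℝ) :
    (∫ x in a..b, C * f x) = C * ∫ x in a..b, f x := by
  have := ((ContinuousLinearMap.mul ℝ (Matrix (Fin J) (Fin J) ℝ) C).intervalIntegral_comp_comm hf)
  simpa using this

theorem iterInt_dual {A : ℝ → Matrix (Fin J) (Fin J) ℝ} (hA : Continuous A) :
    ∀ m, ∀ s u : ℝ, s ≤ u → iterInt A (m + 1) s u = ∫ x in s..u, A x * iterInt A m x u := by
  intro m
  induction m with
  | zero =>
    intro s u _
    show (∫ x in s..u, iterInt A 0 s x * A x) = ∫ x in s..u, A x * iterInt A 0 x u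
    simp [iterInt]
  | succ m ih =>
    intro s u hsu
    have hcm : Continuous fun p : ℝ × ℝ => iterInt A m p.1 p.2 := iterInt_continuous hA m
    have hcm1 : Continuous fun p : ℝ × ℝ => iterInt A (m+1) p.1 p.2 := iterInt_continuous hA (m+1)
    have step1 : iterInt A (m+2) s u
        = ∫ x in s..u, (∫ y in s..x, A y * iterInt A m y x) * A x := by
      show (∫ x in s..u, iterInt A (m+1) s x * A x) = _
      apply intervalIntegral.integral_congr
      intro x hx
      rw [Set.uIcc_of_le hsu] at hx
      simp only []
      rw [ih s x hx.1]
    have step2 : (∫ x in s..u, (∫ y in s..x, A y * iterInt A m y x) * A x)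
        = ∫ x in s..u, ∫ y in s..x, A y * iterInt A m y x * A x := by
      apply intervalIntegral.integral_congr
      intro x hx
      simp only []
      rw [← intervalIntegral_mul_const]
      apply Continuous.intervalIntegrable
      exact (hA.mul (hcm.comp (by fun_prop : Continuous fun y : ℝ => (y, x))))
    have hG : Continuous fun p : ℝ × ℝ => A p.1 * iterInt A m p.1 p.2 * A p.2 :=
      ((hA.comp continuous_fst).mul hcm).mul (hA.comp continuous_snd)
    have step3 : (∫ x in s..u, ∫ y in s..x, A y * iterInt A m y x * A x)
        = ∫ y in s..u, ∫ x in y..u, A y * iterInt A m y x * A x :=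
      fubini_triangle hG hsu
    have step4 : (∫ y in s..u, ∫ x in y..u, A y * iterInt A m y x * A x)
        = ∫ y in s..u, A y * iterInt A (m+1) y u := by
      apply intervalIntegral.integral_congr
      intro y hy
      simp only []
      have : (fun x => A y * iterInt A m y x * A x) = fun x => A y * (iterInt A m y x * A x) := by
        funext x; rw [mul_assoc]
      rw [this, intervalIntegral_const_mul]
      · rfl
      · exact ((hcm.comp (by fun_prop : Continuous fun x : ℝ => (y, x))).mul hA).intervalIntegrable _ _
    rw [show m + 1 + 1 = m + 2 from rfl, step1, step2, step3, step4]

theorem volterra_global {A : ℝ → Matrix (Fin J) (Fin J) ℝ} (hA : Continuous A)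
    {s t : ℝ} (hst : s ≤ t) :
    peanoBaker A s t = 1 + ∫ x in s..t, A x * peanoBaker A x t ∧
      peanoBaker A s t = 1 + ∫ x in s..t, peanoBaker A s x * A x := by
  obtain ⟨C, hC⟩ := isCompact_Icc.exists_bound_of_continuousOn (s := Set.Icc s t) hA.continuousOn
  set M : ℝ := max C 0 with hMdef
  have hM0 : 0 ≤ M := le_max_right C 0
  have hM : ∀ x ∈ Set.Icc s t, ‖A x‖ ≤ M := fun x hx => (hC x hx).trans (le_max_left C 0)
  have hMst : 0 ≤ M * (t - s) := mul_nonneg hM0 (sub_nonneg.2 hst)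
  -- summability bounds
  have hbound1 : ∀ x ∈ Set.Icc s t, ∀ m, ‖iterInt A m x t‖ ≤ (M * (t - s)) ^ m / m.factorial := by
    intro x hx m
    have h1 : ‖iterInt A m x t‖ ≤ (M * (t - x)) ^ m / m.factorial :=
      iterInt_norm_le hA hM0 hx.2 (fun y hy => hM y ⟨hx.1.trans hy.1, hy.2⟩) m
    refine h1.trans (div_le_div_of_nonneg_right ?_ ?_ |>.trans_eq rfl)
    · exact pow_le_pow_left₀ (mul_nonneg hM0 (sub_nonneg.2 hx.2)) (by nlinarith [hx.1]) m
    · positivity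
  have hbound2 : ∀ x ∈ Set.Icc s t, ∀ m, ‖iterInt A m s x‖ ≤ (M * (t - s)) ^ m / m.factorial := by
    intro x hx m
    have h1 : ‖iterInt A m s x‖ ≤ (M * (x - s)) ^ m / m.factorial :=
      iterInt_norm_le hA hM0 hx.1 (fun y hy => hM y ⟨hy.1, hy.2.trans hx.2⟩) m
    refine h1.trans (div_le_div_of_nonneg_right ?_ ?_)
    · exact pow_le_pow_left₀ (mul_nonneg hM0 (sub_nonneg.2 hx.1)) (by nlinarith [hx.2]) m
    · positivity
  have hgsum : Summable fun m : ℕ => (M * (t - s)) ^ m / (m.factorial : ℝ) :=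
    Real.summable_pow_div_factorial _
  have hsum1 : ∀ x ∈ Set.Icc s t, Summable fun m => iterInt A m x t := fun x hx =>
    Summable.of_norm_bounded hgsum (hbound1 x hx)
  have hsum2 : ∀ x ∈ Set.Icc s t, Summable fun m => iterInt A m s x := fun x hx =>
    Summable.of_norm_bounded hgsum (hbound2 x hx)
  have hsummain : Summable fun m => iterInt A m s t := hsum2 t ⟨hst, le_refl t⟩
  have hsplit : peanoBaker A s t = 1 + ∑' m, iterInt A (m+1) s t := by
    rw [peanoBaker, Summable.tsum_eq_zero_add hsummain]; rfl
  constructor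
  · -- first equation
    rw [hsplit]
    congr 1
    have hdual : (∑' m, iterInt A (m+1) s t) = ∑' m, ∫ x in s..t, A x * iterInt A m x t :=
      tsum_congr fun m => iterInt_dual hA m s t hst
    rw [hdual]
    letI : TopologicalSpace (Matrix (Fin J) (Fin J) ℝ) :=
      (Matrix.linftyOpNormedAddCommGroup : NormedAddCommGroup (Matrix (Fin J) (Fin J) ℝ)).toUniformSpace.toTopologicalSpace
    set f : ℕ → C(ℝ, Matrix (Fin J) (Fin J) ℝ) := fun m =>
      ⟨fun x => A x * iterInt A m x t, hA.mul ((iterInt_continuous hA m).comp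
        (by fun_prop : Continuous fun x : ℝ => (x, t)))⟩ with hfdef
    have hnorm : Summable fun m =>
        ‖(f m).restrict (⟨Set.uIcc s t, isCompact_uIcc⟩ : TopologicalSpace.Compacts ℝ)‖ := by
      refine Summable.of_nonneg_of_le (fun m => norm_nonneg _) (fun m => ?_) (hgsum.mul_left M)
      apply ContinuousMap.norm_le _ (by positivity) |>.2
      rintro ⟨x, hx⟩
      have hx' : x ∈ Set.Icc s t := by
        simp only [TopologicalSpace.Compacts.coe_mk] at hx
        rwa [Set.uIcc_of_le hst] at hx
      show ‖A x * iterInt A m x t‖ ≤ M * ((M * (t - s)) ^ m / m.factorial)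
      calc ‖A x * iterInt A m x t‖ ≤ ‖A x‖ * ‖iterInt A m x t‖ := norm_mul_le _ _
        _ ≤ M * ((M * (t - s)) ^ m / m.factorial) :=
            mul_le_mul (hM x hx') (hbound1 x hx' m) (norm_nonneg _) hM0
    have hswap := intervalIntegral.tsum_intervalIntegral_eq_of_summable_norm hnorm
    simp only [hfdef, ContinuousMap.coe_mk] at hswap
    refine hswap.trans ?_
    apply intervalIntegral.integral_congr
    intro x hx
    rw [Set.uIcc_of_le hst] at hx
    show (∑' m, A x * iterInt A m x t) = A x * peanoBaker A x t
    exact (hsum1 x hx).tsum_mul_left (A x)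
  · -- second equation
    rw [hsplit]
    congr 1
    have : (∑' m, iterInt A (m+1) s t) = ∑' m, ∫ x in s..t, iterInt A m s x * A x :=
      tsum_congr fun m => rfl
    rw [this]
    letI : TopologicalSpace (Matrix (Fin J) (Fin J) ℝ) :=
      (Matrix.linftyOpNormedAddCommGroup : NormedAddCommGroup (Matrix (Fin J) (Fin J) ℝ)).toUniformSpace.toTopologicalSpace
    set f : ℕ → C(ℝ, Matrix (Fin J) (Fin J) ℝ) := fun m =>
      ⟨fun x => iterInt A m s x * A x, (((iterInt_continuous hA m).comp
        (by fun_prop : Continuous fun x : ℝ => (s, x))).mul hA)⟩ with hfdef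
    have hnorm : Summable fun m =>
        ‖(f m).restrict (⟨Set.uIcc s t, isCompact_uIcc⟩ : TopologicalSpace.Compacts ℝ)‖ := by
      refine Summable.of_nonneg_of_le (fun m => norm_nonneg _) (fun m => ?_) (hgsum.mul_right M)
      apply ContinuousMap.norm_le _ (by positivity) |>.2
      rintro ⟨x, hx⟩
      have hx' : x ∈ Set.Icc s t := by
        simp only [TopologicalSpace.Compacts.coe_mk] at hx
        rwa [Set.uIcc_of_le hst] at hx
      show ‖iterInt A m s x * A x‖ ≤ (M * (t - s)) ^ m / m.factorial * M
      calc ‖iterInt A m s x * A x‖ ≤ ‖iterInt A m s x‖ * ‖A x‖ := norm_mul_le _ _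
        _ ≤ (M * (t - s)) ^ m / m.factorial * M :=
            mul_le_mul (hbound2 x hx' m) (hM x hx') (norm_nonneg _) (by positivity)
    have hswap := intervalIntegral.tsum_intervalIntegral_eq_of_summable_norm hnorm
    simp only [hfdef, ContinuousMap.coe_mk] at hswap
    refine hswap.trans ?_
    apply intervalIntegral.integral_congr
    intro x hx
    rw [Set.uIcc_of_le hst] at hx
    show (∑' m, iterInt A m s x * A x) = peanoBaker A s x * A x
    exact (hsum2 x hx).tsum_mul_right (A x)

/-- the Peano-Baker series satisfies both Volterra integral equations
`B(s,t) = Id + ∫_s^t A(x) B(x,t) dx` and `B(s,t) = Id + ∫_s^t B(s,x) A(x) dx`. -/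
theorem peanoBaker_volterra {J : ℕ}
    (A : ℝ → Matrix (Fin J) (Fin J) ℝ) (a t : ℝ)
    (hA : ContinuousOn A (Set.Icc a t)) :
    ∀ s, a ≤ s → s ≤ t →
      peanoBaker A s t = 1 + ∫ x in s..t, A x * peanoBaker A x t ∧
      peanoBaker A s t = 1 + ∫ x in s..t, peanoBaker A s x * A x := by
  intro s has hst
  have hat : a ≤ t := has.trans hst
  set A' : ℝ → Matrix (Fin J) (Fin J) ℝ :=
    fun x => (Set.Icc a t).restrict A (Set.projIcc a t hat x) with hA'def
  have hA' : Continuous A' := hA.restrict.comp continuous_projIcc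
  have heq : ∀ x ∈ Set.Icc a t, A x = A' x := by
    intro x hx
    rw [hA'def]
    simp only []
    rw [Set.projIcc_of_mem hat hx]
    rfl
  have hiter := iterInt_congr (A₁ := A) (A₂ := A') (a := a) (t := t) heq
  have hpb : ∀ s' ∈ Set.Icc a t, ∀ u ∈ Set.Icc a t, peanoBaker A s' u = peanoBaker A' s' u := by
    intro s' hs' u hu
    exact tsum_congr fun m => hiter m s' hs' u hu
  have hsI : s ∈ Set.Icc a t := ⟨has, hst⟩
  have htI : t ∈ Set.Icc a t := ⟨hat, le_refl t⟩
  obtain ⟨e1, e2⟩ := volterra_global hA' hst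
  have hsub : Set.uIcc s t ⊆ Set.Icc a t := Set.uIcc_subset_Icc hsI htI
  constructor
  · rw [hpb s hsI t htI, e1]
    congr 1
    apply intervalIntegral.integral_congr
    intro x hx
    have hx' : x ∈ Set.Icc a t := hsub hx
    simp only []
    rw [← heq x hx', ← hpb x hx' t htI]
  · rw [hpb s hsI t htI, e2]
    congr 1
    apply intervalIntegral.integral_congr
    intro x hx
    have hx' : x ∈ Set.Icc a t := hsub hx
    simp only []
    rw [← heq x hx', ← hpb s hsI x hx']
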